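/- Let S = ⟨A ∣ u → v⟩ be a one-rule SRS, let x_1 →_S x_2 →_S ⋯ →_S x_n be a reduction with steps carried out at positions p_1, …, p_{n−1}, and let x̄_1 → x̄_2 → ⋯ → x̄_n be its lift to the decorated SRS S̄. If x̄_n contains a decorated letter and the leftmost decorated letter of x̄_n is at position i, then: (1) no step of the reduction is carried out at a position j with j < i, and (2) some step of the reduction is carried out at position i. -/
import Mathlib


/-- One-step reduction of the one-rule SRS `⟨A ∣ u → v⟩`: `w →_S w'`. -/
def Step {A : Type*} (u v w w' : List A) : Prop :=
  ∃ p q : List A, w = p ++ u ++ q ∧ w' = p ++ v ++ q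

/-- One-step reduction of `⟨A ∣ u → v⟩` carried out at position `i`. -/
def StepAt {A : Type*} (u v : List A) (i : ℕ) (w w' : List A) : Prop :=
  ∃ p q : List A, p.length = i ∧ w = p ++ u ++ q ∧ w' = p ++ v ++ q

/-- The diamond graph `M_k` is embeddable in the reduction graph `G_S` of
`S = ⟨A ∣ u → v⟩`: there are pairwise distinct words `x, y, z_1, …, z_k`
with `x →_S z_i` and `z_i →_S y` for every `i`. -/
def MkEmbeddable {A : Type*} (u v : List A) (k : ℕ) : Prop :=
  ∃ (x y : List A) (z : Fin k → List A),
    Function.Injective z ∧ (∀ i, x ≠ z i) ∧ (∀ i, y ≠ z i) ∧ x ≠ y ∧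
    ∀ i, Step u v x (z i) ∧ Step u v (z i) y

/-- Projection from the decorated alphabet `A ⊕ A` (`inl a` = plain letter `a`,
`inr a` = decorated letter `a•`) back to `A`. -/
def proj {A : Type*} : A ⊕ A → A := Sum.elim id id

/-- One-step reduction of the decorated SRS `S̄` carried out at position `i`:
some word `ū` projecting to `u` is replaced by the fully decorated `v•`. -/
def DecStepAt {A : Type*} (u v : List A) (i : ℕ) (w w' : List (A ⊕ A)) : Prop :=
  ∃ p q ubar : List (A ⊕ A),
    p.length = i ∧ ubar.map proj = u ∧
    w = p ++ ubar ++ q ∧ w' = p ++ v.map Sum.inr ++ q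

/-- The leftmost decorated letter of `w` is at position `i`. -/
def FirstDecorated {A : Type*} (w : List (A ⊕ A)) (i : ℕ) : Prop :=
  (∃ a : A, w[i]? = some (Sum.inr a)) ∧
  ∀ j < i, ∀ a : A, w[j]? ≠ some (Sum.inr a)

/-- The one-rule SRS `⟨A ∣ u → v⟩` is left cancellative:
`u, v` are nonempty and their first letters are distinct. -/
def LeftCancellative {A : Type*} (u v : List A) : Prop :=
  u ≠ [] ∧ v ≠ [] ∧ u.head? ≠ v.head?

/-- `w` is bordered with `T`: `T` is both a prefix and a suffix of `w`. -/
def Bordered {A : Type*} (T w : List A) : Prop :=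
  T <+: w ∧ T <:+ w

/-- `T` is self-overlap-free: `OVL(T) = ∅`, i.e. there is no nonempty `w`
with `T = x ++ w = w ++ y` for nonempty `x, y`. -/
def SelfOverlapFree {A : Type*} (T : List A) : Prop :=
  ∀ w x y : List A, w ≠ [] → x ≠ [] → y ≠ [] → T = x ++ w → T = w ++ y → False

/-- `glue T [R₁, …, R_k] = T R₁ T R₂ ⋯ T R_k T`, the word of `Bord_T` whose
canonical decomposition is `R₁, …, R_k`; thus `φ_T (glue T Rs) = Rs`
(a word of length `Rs.length` over the alphabet `B` of `T`-free words). -/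
def glue {A : Type*} (T : List A) : List (List A) → List A
  | [] => T
  | R :: Rs => T ++ R ++ glue T Rs


section FDPAux
variable {A : Type*}

/-- position `j` of `w` is decorated -/
private def Dec (w : List (A ⊕ A)) (j : ℕ) : Prop := ∃ a : A, w[j]? = some (Sum.inr a)

private lemma undec_of_map_inl (l : List A) (j : ℕ) : ¬ Dec (l.map Sum.inl) j := by
  rintro ⟨a, ha⟩
  rw [List.getElem?_map] at ha
  cases h : l[j]? with
  | none => rw [h] at ha; simp at ha
  | some b => rw [h] at ha; simp at ha

private lemma exists_firstDec (w : List (A ⊕ A)) (h : ∃ j, Dec w j) :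
    ∃ i, Dec w i ∧ ∀ j < i, ¬ Dec w j := by
  classical
  exact ⟨Nat.find h, Nat.find_spec h, fun j hj => Nat.find_min h hj⟩

private lemma nodec_of_v_nil (u : List A) (xb : ℕ → List (A ⊕ A)) (pos : ℕ → ℕ) (n : ℕ)
    (h0 : ∀ j, ¬ Dec (xb 0) j)
    (hstep : ∀ j < n, DecStepAt u [] (pos j) (xb j) (xb (j+1))) :
    ∀ j, ¬ Dec (xb n) j := by
  induction n with
  | zero => exact h0
  | succ m ih =>
    obtain ⟨P, Q, ub, hP, hub, heq, heq'⟩ := hstep m (Nat.lt_succ_self m)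
    intro j ⟨a, ha⟩
    simp only [List.map_nil] at heq'
    have hmem : Sum.inr a ∈ xb (m+1) := List.mem_of_getElem? ha
    rw [heq'] at hmem
    have hmem' : Sum.inr a ∈ xb m := by
      rw [heq]; simp only [List.append_assoc, List.mem_append] at hmem ⊢
      tauto
    obtain ⟨k, hk, hk'⟩ := List.mem_iff_getElem.mp hmem'
    exact ih (fun j hj => hstep j (hj.trans (Nat.lt_succ_self m))) k
      ⟨a, by rw [List.getElem?_eq_getElem hk, hk']⟩

private lemma dec_at_pos {v : List A} (hv : v ≠ []) (P Q : List (A ⊕ A)) :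
    Dec (P ++ v.map Sum.inr ++ Q) P.length := by
  obtain ⟨b, v', rfl⟩ := List.exists_cons_of_ne_nil hv
  refine ⟨b, ?_⟩
  have h1 : P.length < (P ++ (b :: v').map Sum.inr).length := by
    simp
  rw [List.getElem?_append_left h1, List.getElem?_append_right (le_refl P.length)]
  simp

private lemma key (u v : List A) (hv : v ≠ []) (n : ℕ) :
    ∀ (xb : ℕ → List (A ⊕ A)) (pos : ℕ → ℕ),
    (∀ j, ¬ Dec (xb 0) j) →
    (∀ j < n, DecStepAt u v (pos j) (xb j) (xb (j+1))) →
    ∀ i, Dec (xb n) i → (∀ j < i, ¬ Dec (xb n) j) →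
      (∀ j < n, i ≤ pos j) ∧ (∃ j < n, pos j = i) := by
  induction n with
  | zero =>
    intro xb pos h0 _ i hdec _
    exact absurd hdec (h0 i)
  | succ m ih =>
    intro xb pos h0 hstep i hdec hmin
    obtain ⟨P, Q, ub, hP, hub, heq, heq'⟩ := hstep m (Nat.lt_succ_self m)
    have hstep' : ∀ j < m, DecStepAt u v (pos j) (xb j) (xb (j+1)) :=
      fun j hj => hstep j (hj.trans (Nat.lt_succ_self m))
    -- position `pos m` of `xb (m+1)` is decorated
    have hdp : Dec (xb (m+1)) P.length := by rw [heq']; exact dec_at_pos hv P Q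
    -- same prefixes below P.length
    have hpre : ∀ j < P.length, (xb m)[j]? = (xb (m+1))[j]? := by
      intro j hj
      rw [heq, heq']
      rw [List.append_assoc, List.append_assoc,
        List.getElem?_append_left hj, List.getElem?_append_left hj]
    by_cases hcase : i < P.length
    · -- first decorated letter is inside the common prefix P
      have hdec' : Dec (xb m) i := by
        obtain ⟨a, ha⟩ := hdec
        exact ⟨a, by rw [hpre i hcase]; exact ha⟩
      have hmin' : ∀ j < i, ¬ Dec (xb m) j := by
        intro j hj ⟨a, ha⟩
        exact hmin j hj ⟨a, by rw [← hpre j (hj.trans hcase)]; exact ha⟩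
      obtain ⟨h1, j, hj, hj'⟩ := ih xb pos h0 hstep' i hdec' hmin'
      refine ⟨?_, j, hj.trans (Nat.lt_succ_self m), hj'⟩
      intro j' hj'
      rcases Nat.lt_succ_iff_lt_or_eq.mp hj' with h | h
      · exact h1 j' h
      · rw [h, ← hP]; exact le_of_lt hcase
    · -- i = P.length = pos m
      have hip : i = P.length := by
        rcases Nat.lt_or_ge P.length i with h | h
        · exact absurd hdp (hmin _ h)
        · omega
      subst hip
      refine ⟨?_, m, Nat.lt_succ_self m, hP.symm⟩
      intro j hj
      rcases Nat.lt_succ_iff_lt_or_eq.mp hj with h | h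
      · -- need decoration in `xb m`, whose first position is ≥ P.length
        rcases Nat.eq_zero_or_pos m with rfl | hm
        · omega
        · obtain ⟨P', Q', ub', _, _, _, heqm⟩ := hstep (m-1) (by omega)
          have : m - 1 + 1 = m := by omega
          rw [this] at heqm
          have hdm : ∃ k, Dec (xb m) k := ⟨P'.length, by rw [heqm]; exact dec_at_pos hv P' Q'⟩
          obtain ⟨i', hi'1, hi'2⟩ := exists_firstDec _ hdm
          have hPi' : P.length ≤ i' := by
            by_contra hc
            push_neg at hc
            obtain ⟨a, ha⟩ := hi'1
            exact hmin i' hc ⟨a, by rw [← hpre i' hc]; exact ha⟩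
          obtain ⟨h1, _⟩ := ih xb pos h0 hstep' i' hi'1 hi'2
          exact hPi'.trans (h1 j h)
      · rw [h, ← hP]

end FDPAux

/-- if the leftmost decorated letter of the lift `x̄_n` is at
position `i`, then (1) no step of the reduction is carried out at a position
`j < i`, and (2) some step of the reduction is carried out at position `i`. -/
theorem first_decorated_position {A : Type*} (u v : List A) (n : ℕ)
    (x : Fin (n + 1) → List A) (xbar : Fin (n + 1) → List (A ⊕ A))
    (pos : Fin n → ℕ)
    (hstart : xbar 0 = (x 0).map Sum.inl)
    (hproj : ∀ j, (xbar j).map proj = x j)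
    (hstep : ∀ j : Fin n, StepAt u v (pos j) (x j.castSucc) (x j.succ))
    (hdstep : ∀ j : Fin n, DecStepAt u v (pos j) (xbar j.castSucc) (xbar j.succ))
    (i : ℕ) (hi : FirstDecorated (xbar (Fin.last n)) i) :
    (∀ j : Fin n, ¬ pos j < i) ∧ (∃ j : Fin n, pos j = i) := by
  classical
  -- case n = 0
  rcases Nat.eq_zero_or_pos n with rfl | hn
  · refine ⟨fun j => j.elim0, ?_⟩
    exfalso
    have h0 : Fin.last 0 = (0 : Fin 1) := rfl
    rw [h0, hstart] at hi
    obtain ⟨a, ha⟩ := hi.1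
    exact undec_of_map_inl (x 0) i ⟨a, ha⟩
  -- sequences indexed by ℕ
  set xb : ℕ → List (A ⊕ A) := fun t => xbar ⟨min t n, by omega⟩ with hxb
  set posN : ℕ → ℕ := fun t => pos ⟨min t (n-1), by omega⟩ with hposN
  have hxb0 : xb 0 = xbar 0 := by simp [hxb]
  have hxbn : xb n = xbar (Fin.last n) := by
    simp only [hxb, min_self]; rfl
  have h0 : ∀ j, ¬ Dec (xb 0) j := by
    rw [hxb0, hstart]; exact undec_of_map_inl (x 0)
  have hsteps : ∀ j < n, DecStepAt u v (posN j) (xb j) (xb (j+1)) := by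
    intro j hj
    have h1 : xb j = xbar (Fin.castSucc ⟨j, hj⟩) := by
      simp only [hxb]
      congr 1
      exact Fin.ext (by simp [Fin.castSucc]; omega)
    have h2 : xb (j+1) = xbar (Fin.succ ⟨j, hj⟩) := by
      simp only [hxb]
      congr 1
      exact Fin.ext (by simp [Fin.succ]; omega)
    have h3 : posN j = pos ⟨j, hj⟩ := by
      simp only [hposN]
      congr 1
      exact Fin.ext (by simp; omega)
    rw [h1, h2, h3]
    exact hdstep ⟨j, hj⟩
  have hdec : Dec (xb n) i := by rw [hxbn]; exact hi.1
  have hmin : ∀ j < i, ¬ Dec (xb n) j := by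
    intro j hj ⟨a, ha⟩
    rw [hxbn] at ha
    exact hi.2 j hj a ha
  -- v cannot be empty
  rcases eq_or_ne v [] with rfl | hv
  · exact absurd hdec (nodec_of_v_nil u xb posN n h0 hsteps i)
  obtain ⟨h1, j, hj, hj'⟩ := key u v hv n xb posN h0 hsteps i hdec hmin
  constructor
  · intro j'
    have := h1 j'.val j'.isLt
    have heq : posN j'.val = pos j' := by
      simp only [hposN]
      congr 1
      exact Fin.ext (by simp; omega)
    omega
  · refine ⟨⟨j, hj⟩, ?_⟩
    rw [← hj']
    simp only [hposN]
    congr 1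
    exact Fin.ext (by simp; omega)
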